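/- Let R be a field, let G be the cyclic group of order n generated by g, with listing 1, g, g², …, g^{n−1}, and let p, q ∈ R[x] be polynomials with p·q = x^n − 1. Let u, v ∈ RG be the images of p and q under the ring homomorphism R[x] → RG sending x to g. Then rank σ(u) + rank σ(v) = n. -/

import Mathlib

/-- The `RG`-matrix of an element `w` of the group ring `RG`, relative to a
listing `g : Fin n ≃ G` of the elements of `G`. -/
noncomputable def rgMatrix {R : Type*} [Semiring R] {G : Type*} [Group G] {n : ℕ}
    (g : Fin n ≃ G) (w : MonoidAlgebra R G) : Matrix (Fin n) (Fin n) R :=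
  Matrix.of fun i j => w.coeff ((g i)⁻¹ * g j)

open Polynomial Matrix

set_option maxHeartbeats 1000000 in
/-- let `G` be cyclic of order `n` generated by `g0`, with listing
`1, g0, g0², …, g0^(n-1)`, and let `p, q ∈ R[x]` with `p q = xⁿ - 1`. Let `u, v ∈ RG`
be the images of `p, q` under the ring homomorphism `R[x] → RG` sending `x` to `g0`.
Then `rank σ(u) + rank σ(v) = n`. -/
theorem stmt17 {R : Type*} [Field R] {G : Type*} [Group G] {n : ℕ}
    (g0 : G) (e : Fin n ≃ G) (he : ∀ i : Fin n, e i = g0 ^ (i : ℕ))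
    (p q : Polynomial R) (hpq : p * q = Polynomial.X ^ n - 1) :
    (rgMatrix e (Polynomial.aeval (MonoidAlgebra.of R G g0) p)).rank
      + (rgMatrix e (Polynomial.aeval (MonoidAlgebra.of R G g0) q)).rank = n := by
  classical
  have hn : n ≠ 0 := by
    rintro rfl
    exact (e.symm 1).elim0
  haveI : Fintype G := Fintype.ofEquiv _ e
  have hcard : Fintype.card G = n := by
    rw [← Fintype.card_fin n]; exact (Fintype.card_congr e).symm
  have hg0 : g0 ^ n = 1 := by rw [← hcard]; exact pow_card_eq_one
  have hpow : ∀ g : G, ∃ k : ℕ, g = g0 ^ k := fun g =>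
    ⟨(e.symm g : Fin n), by rw [← he, Equiv.apply_symm_apply]⟩
  have hcomm : ∀ a b : G, a * b = b * a := by
    intro a b
    obtain ⟨i, rfl⟩ := hpow a
    obtain ⟨j, rfl⟩ := hpow b
    rw [← pow_add, ← pow_add, Nat.add_comm]
  -- the polynomial and the adjoin-root ring
  set f : R[X] := X ^ n - 1 with hf_def
  have hfmonic : f.Monic := by
    have := monic_X_pow_sub_C (1 : R) hn
    rwa [Polynomial.C_1] at this
  have hf0 : f ≠ 0 := hfmonic.ne_zero
  have hdeg : f.natDegree = n := by
    have : (X ^ n - C (1 : R)).natDegree = n := natDegree_X_pow_sub_C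
    rwa [Polynomial.C_1] at this
  let A := AdjoinRoot f
  let pb : PowerBasis R A := AdjoinRoot.powerBasis hf0
  haveI : FiniteDimensional R A := Module.Finite.of_basis pb.basis
  have hfrA : Module.finrank R A = n := by
    rw [PowerBasis.finrank pb]
    show (AdjoinRoot.powerBasis hf0).dim = n
    rw [AdjoinRoot.powerBasis_dim, hdeg]
  -- basis of the group algebra
  let b : Module.Basis (Fin n) R (MonoidAlgebra R G) :=
    (MonoidAlgebra.basis G R : Module.Basis G R (MonoidAlgebra R G)).reindex e.symm
  have hb : ∀ i, b i = MonoidAlgebra.single (e i) 1 := fun i => by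
    show ((MonoidAlgebra.basis G R).reindex e.symm) i = _
    rw [Module.Basis.reindex_apply, Equiv.symm_symm]
    rfl
  have hrepr : ∀ (x : MonoidAlgebra R G) (i : Fin n), b.repr x i = x.coeff (e i) := by
    intro x i
    show (((MonoidAlgebra.basis G R).reindex e.symm).repr x) i = _
    rw [Module.Basis.repr_reindex_apply, Equiv.symm_symm]
    rfl
  haveI : FiniteDimensional R (MonoidAlgebra R G) := Module.Finite.of_basis b
  have hfrM : Module.finrank R (MonoidAlgebra R G) = n := by
    rw [Module.finrank_eq_card_basis b, Fintype.card_fin]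
  -- the algebra map A → RG
  let ψ : R[X] →ₐ[R] MonoidAlgebra R G := aeval (MonoidAlgebra.of R G g0)
  have haev : ψ f = 0 := by
    show aeval (MonoidAlgebra.of R G g0) f = 0
    rw [hf_def, map_sub, _root_.map_one, _root_.map_pow, aeval_X, ← _root_.map_pow, hg0,
      _root_.map_one, sub_self]
  have hI : ∀ a : R[X], a ∈ (Ideal.span {f} : Ideal R[X]) → ψ a = 0 := by
    intro a ha
    obtain ⟨c, rfl⟩ := Ideal.mem_span_singleton.1 ha
    rw [_root_.map_mul, haev, zero_mul]
  let φ : A →ₐ[R] MonoidAlgebra R G := Ideal.Quotient.liftₐ (Ideal.span {f}) ψ hI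
  have hφmk : ∀ g : R[X], φ (AdjoinRoot.mk f g) = aeval (MonoidAlgebra.of R G g0) g :=
    fun g => rfl
  have hsurj : Function.Surjective φ := by
    intro w
    induction w using MonoidAlgebra.induction_on with
    | of g =>
        obtain ⟨k, rfl⟩ := hpow g
        exact ⟨AdjoinRoot.mk f (X ^ k), by
          rw [hφmk, _root_.map_pow, aeval_X, ← _root_.map_pow]⟩
    | add x y hx hy =>
        obtain ⟨a, rfl⟩ := hx; obtain ⟨c, rfl⟩ := hy; exact ⟨a + c, map_add φ a c⟩
    | smul r x hx =>
        obtain ⟨a, rfl⟩ := hx; exact ⟨r • a, map_smul φ r a⟩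
  have hinj : Function.Injective φ :=
    (LinearMap.injective_iff_surjective_of_finrank_eq_finrank
      (by rw [hfrA, hfrM]) (f := φ.toLinearMap)).2 hsurj
  let Φ : A ≃ₗ[R] MonoidAlgebra R G :=
    LinearEquiv.ofBijective φ.toLinearMap ⟨hinj, hsurj⟩
  have hΦ : ∀ a : A, Φ a = φ a := fun a => rfl
  -- rank of the rgMatrix equals rank of left multiplication on `A`
  have key : ∀ w : R[X],
      (rgMatrix e (aeval (MonoidAlgebra.of R G g0) w)).rank
        = Module.finrank R (LinearMap.range (LinearMap.mulLeft R (AdjoinRoot.mk f w))) := by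
    intro w
    set u : MonoidAlgebra R G := aeval (MonoidAlgebra.of R G g0) w with hu_def
    have hu : φ (AdjoinRoot.mk f w) = u := hφmk w
    have hmat : rgMatrix e u = (LinearMap.toMatrix b b (LinearMap.mulLeft R u))ᵀ := by
      ext i j
      rw [Matrix.transpose_apply, LinearMap.toMatrix_apply, hb i, LinearMap.mulLeft_apply,
        hrepr, MonoidAlgebra.mul_single_apply, mul_one]
      simp only [rgMatrix, Matrix.of_apply]
      rw [hcomm ((e i)⁻¹) (e j)]
    rw [hmat, Matrix.rank_transpose,
      Matrix.rank_eq_finrank_range_toLin (LinearMap.toMatrix b b (LinearMap.mulLeft R u)) b b,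
      Matrix.toLin_toMatrix]
    have hcompat : LinearMap.mulLeft R u ∘ₗ (Φ : A →ₗ[R] MonoidAlgebra R G)
        = (Φ : A →ₗ[R] MonoidAlgebra R G) ∘ₗ LinearMap.mulLeft R (AdjoinRoot.mk f w) := by
      apply LinearMap.ext
      intro a
      show u * Φ a = Φ (AdjoinRoot.mk f w * a)
      rw [hΦ, hΦ, ← hu, ← _root_.map_mul]
    have hrange : LinearMap.range (LinearMap.mulLeft R u)
        = Submodule.map (Φ : A →ₗ[R] MonoidAlgebra R G)
            (LinearMap.range (LinearMap.mulLeft R (AdjoinRoot.mk f w))) :=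
      calc LinearMap.range (LinearMap.mulLeft R u)
          = LinearMap.range (LinearMap.mulLeft R u ∘ₗ (Φ : A →ₗ[R] MonoidAlgebra R G)) :=
            (LinearMap.range_comp_of_range_eq_top _
              (LinearMap.range_eq_top.2 Φ.surjective)).symm
        _ = LinearMap.range ((Φ : A →ₗ[R] MonoidAlgebra R G)
              ∘ₗ LinearMap.mulLeft R (AdjoinRoot.mk f w)) := by rw [hcompat]
        _ = Submodule.map (Φ : A →ₗ[R] MonoidAlgebra R G)
              (LinearMap.range (LinearMap.mulLeft R (AdjoinRoot.mk f w))) :=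
            LinearMap.range_comp _ _
    rw [hrange, LinearEquiv.finrank_map_eq]
  rw [key p, key q]
  -- now work in A
  set p' := AdjoinRoot.mk f p with hp'
  set q' := AdjoinRoot.mk f q with hq'
  have hp0 : p ≠ 0 := by
    rintro rfl
    rw [zero_mul] at hpq
    exact hf0 hpq.symm
  have hker : LinearMap.ker (LinearMap.mulLeft R p')
      = LinearMap.range (LinearMap.mulLeft R q') := by
    ext x
    simp only [LinearMap.mem_ker, LinearMap.mem_range, LinearMap.mulLeft_apply]
    constructor
    · intro hx
      obtain ⟨F, rfl⟩ := AdjoinRoot.mk_surjective x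
      rw [hp', ← _root_.map_mul, AdjoinRoot.mk_eq_zero, ← hpq] at hx
      obtain ⟨c, hc⟩ := hx
      rw [mul_assoc] at hc
      have hF : F = q * c := mul_left_cancel₀ hp0 hc
      exact ⟨AdjoinRoot.mk f c, by rw [hq', ← _root_.map_mul, ← hF]⟩
    · rintro ⟨y, rfl⟩
      obtain ⟨c, rfl⟩ := AdjoinRoot.mk_surjective y
      rw [hp', hq', ← _root_.map_mul, ← _root_.map_mul, ← mul_assoc, hpq, AdjoinRoot.mk_eq_zero]
      exact dvd_mul_right f c
  have hrn := LinearMap.finrank_range_add_finrank_ker (LinearMap.mulLeft R p')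
  rw [hker, hfrA] at hrn
  exact hrn
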